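/- arXiv:1412.0137 — 2 statements merged into one kernel-verified Lean document; each statement's English description precedes it below -/
import Mathlib

section
/- Let A be a line arrangement in ℝ². If χ = (P,Q) is a polynomial vector field of degree d (i.e., max(deg P, deg Q) = d) that fixes every line of A and whose set of invariant lines is finite, then d ≥ max{m(A)−1, p(A)}. In particular, the minimal degree d_f(A) of a polynomial vector field fixing A and fixing only finitely many lines satisfies d_f(A) ≥ ν_∞(A) = max{m(A)−1, p(A)}. -/
open MvPolynomial Polynomial

/-- Evaluation of a bivariate polynomial at a point of `ℝ × ℝ`
(the variable `X 0` is `x`, the variable `X 1` is `y`). -/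
noncomputable def pev (P : MvPolynomial (Fin 2) ℝ) (q : ℝ × ℝ) : ℝ :=
  MvPolynomial.eval ![q.1, q.2] P

/-- The line `{(x, y) | a * x + b * y + c = 0}`. -/
def lineSet (a b c : ℝ) : Set (ℝ × ℝ) := {q : ℝ × ℝ | a * q.1 + b * q.2 + c = 0}

/-- A subset of `ℝ²` is a line if it is the zero set of an affine form
`a * x + b * y + c` with `(a, b) ≠ (0, 0)`. -/
def IsLine (L : Set (ℝ × ℝ)) : Prop :=
  ∃ a b c : ℝ, (a, b) ≠ (0, 0) ∧ L = lineSet a b c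

/-- The line `L` is invariant by the polynomial vector field `χ = P ∂x + Q ∂y`:
for a defining affine form `a * x + b * y + c` of `L`, the polynomial
`a * P + b * Q` vanishes at every point of `L`. -/
def InvLine (P Q : MvPolynomial (Fin 2) ℝ) (L : Set (ℝ × ℝ)) : Prop :=
  ∃ a b c : ℝ, (a, b) ≠ (0, 0) ∧ L = lineSet a b c ∧
    ∀ q ∈ L, a * pev P q + b * pev Q q = 0

open scoped Classical in
/-- The number of lines of the arrangement `A` passing through the point `q`. -/
noncomputable def numThrough (A : Finset (Set (ℝ × ℝ))) (q : ℝ × ℝ) : ℕ :=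
  (A.filter (fun L => q ∈ L)).card

/-- `mArr A` is the maximal number of lines of `A` passing through a common point. -/
noncomputable def mArr (A : Finset (Set (ℝ × ℝ))) : ℕ :=
  sSup (Set.range (numThrough A))

/-- Two lines are parallel if they are equal or disjoint. -/
def ParLines (L L' : Set (ℝ × ℝ)) : Prop := L = L' ∨ L ∩ L' = ∅

/-- `pArr A` is the maximal number of pairwise parallel lines in `A`. -/
noncomputable def pArr (A : Finset (Set (ℝ × ℝ))) : ℕ :=
  sSup {k : ℕ | ∃ S : Finset (Set (ℝ × ℝ)), S ⊆ A ∧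
    (∀ L ∈ S, ∀ L' ∈ S, ParLines L L') ∧ S.card = k}


lemma sq_pos_of_ne {a b : ℝ} (hab : (a, b) ≠ ((0:ℝ), (0:ℝ))) : 0 < a^2 + b^2 := by
  rcases eq_or_ne a 0 with ha | ha
  · rcases eq_or_ne b 0 with hb | hb
    · exact absurd (by rw [ha, hb]) hab
    · positivity
  · positivity

lemma perp_exists {a b x y : ℝ} (hab : (a, b) ≠ ((0:ℝ), (0:ℝ))) (h : a * x + b * y = 0) :
    ∃ t : ℝ, x = -(t * b) ∧ y = t * a := by
  have hn : a^2 + b^2 ≠ 0 := (sq_pos_of_ne hab).ne'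
  refine ⟨(-(b * x) + a * y) / (a^2 + b^2), ?_, ?_⟩ <;> field_simp <;> ring_nf
  · linear_combination a * h
  · linear_combination b * h

lemma colinear_exists {a b x y : ℝ} (hab : (a, b) ≠ ((0:ℝ), (0:ℝ))) (h : a * y = b * x) :
    ∃ l : ℝ, x = l * a ∧ y = l * b := by
  have hn : a^2 + b^2 ≠ 0 := (sq_pos_of_ne hab).ne'
  refine ⟨(a * x + b * y) / (a^2 + b^2), ?_, ?_⟩ <;> field_simp <;> ring_nf
  · linear_combination (-b) * h
  · linear_combination a * h

lemma lineSet_basept {a b c : ℝ} (hab : (a, b) ≠ ((0:ℝ), (0:ℝ))) :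
    (-(c * a) / (a^2 + b^2), -(c * b) / (a^2 + b^2)) ∈ lineSet a b c := by
  have hn : a^2 + b^2 ≠ 0 := (sq_pos_of_ne hab).ne'
  simp only [lineSet, Set.mem_setOf_eq]
  field_simp
  ring

lemma lineSet_c_inj {a b c c' : ℝ} (hab : (a, b) ≠ ((0:ℝ), (0:ℝ)))
    (h : lineSet a b c = lineSet a b c') : c = c' := by
  have h1 := lineSet_basept (c := c) hab
  rw [h] at h1
  have h2 := lineSet_basept (c := c) hab
  simp only [lineSet, Set.mem_setOf_eq] at h1 h2
  linarith

lemma lineSet_cross {a b c a' b' c' : ℝ} (hab : (a, b) ≠ ((0:ℝ), (0:ℝ)))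
    (h : lineSet a b c = lineSet a' b' c') : a * b' = b * a' := by
  have hn : a^2 + b^2 ≠ 0 := (sq_pos_of_ne hab).ne'
  have h1 := lineSet_basept (c := c) hab
  have h2 : (-(c * a) / (a^2 + b^2) - b, -(c * b) / (a^2 + b^2) + a) ∈ lineSet a b c := by
    simp only [lineSet, Set.mem_setOf_eq] at h1 ⊢
    ring_nf
    ring_nf at h1
    linarith
  rw [h] at h1 h2
  simp only [lineSet, Set.mem_setOf_eq] at h1 h2
  nlinarith [h1, h2]

lemma lineSet_param {a b c u : ℝ} {q : ℝ × ℝ} (hab : (a, b) ≠ ((0:ℝ), (0:ℝ)))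
    (hq : q ∈ lineSet a b c) (hu : a * (u^2 - 1) = 2 * b * u) :
    lineSet a b c = {r : ℝ × ℝ | ∃ t : ℝ, r = (q.1 + t * (1 - u^2), q.2 + t * (2 * u))} := by
  have hdir : a * (1 - u^2) + b * (2 * u) = 0 := by linarith
  have hδ : ((1 - u^2 : ℝ), (2 * u : ℝ)) ≠ ((0:ℝ), (0:ℝ)) := by
    intro hc
    have h1 : 1 - u^2 = 0 := congrArg Prod.fst hc
    have h2 : 2 * u = 0 := congrArg Prod.snd hc
    nlinarith
  obtain ⟨s, hs1, hs2⟩ := perp_exists hab hdir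
  have hs : s ≠ 0 := by
    intro h0
    rw [h0] at hs1 hs2
    simp at hs1 hs2
    nlinarith [hs1, hs2]
  simp only [lineSet, Set.mem_setOf_eq] at hq
  ext r
  simp only [lineSet, Set.mem_setOf_eq]
  constructor
  · intro hr
    have hd : a * (r.1 - q.1) + b * (r.2 - q.2) = 0 := by linarith
    obtain ⟨t, ht1, ht2⟩ := perp_exists hab hd
    refine ⟨t / s, ?_⟩
    have e1 : r.1 = q.1 + t / s * (1 - u^2) := by
      rw [hs1]; field_simp; linear_combination ht1
    have e2 : r.2 = q.2 + t / s * (2 * u) := by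
      rw [hs2]; field_simp; linear_combination ht2
    exact Prod.ext e1 e2
  · rintro ⟨t, rfl⟩
    simp only
    linear_combination hq + t * hdir

lemma eval_aeval_pair (f g : Polynomial ℝ) (R : MvPolynomial (Fin 2) ℝ) (τ : ℝ) :
    (MvPolynomial.aeval ![f, g] R).eval τ = MvPolynomial.eval ![f.eval τ, g.eval τ] R := by
  induction R using MvPolynomial.induction_on with
  | C a => simp
  | add p q hp hq => simp [hp, hq]
  | mul_X p i hp => fin_cases i <;> simp [hp]

lemma natDegree_aeval_pair_le (f g : Polynomial ℝ) (e : ℕ)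
    (hf : f.natDegree ≤ e) (hg : g.natDegree ≤ e) (R : MvPolynomial (Fin 2) ℝ) :
    (MvPolynomial.aeval ![f, g] R).natDegree ≤ e * R.totalDegree := by
  rw [MvPolynomial.aeval_def, MvPolynomial.eval₂_eq']
  apply Polynomial.natDegree_sum_le_of_forall_le
  intro m hm
  have hsum : m 0 + m 1 ≤ R.totalDegree := by
    have := MvPolynomial.le_totalDegree hm
    rwa [Finsupp.sum_fintype _ _ (fun i => rfl), Fin.sum_univ_two] at this
  calc ((algebraMap ℝ ℝ[X]) (MvPolynomial.coeff m R) * ∏ i : Fin 2, ![f, g] i ^ m i).natDegree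
      ≤ ((algebraMap ℝ ℝ[X]) (MvPolynomial.coeff m R)).natDegree
        + (∏ i : Fin 2, ![f, g] i ^ m i).natDegree := natDegree_mul_le
    _ ≤ 0 + (f ^ m 0 * g ^ m 1).natDegree := by
        rw [Fin.prod_univ_two]; simp [Polynomial.natDegree_C]
    _ ≤ (f ^ m 0).natDegree + (g ^ m 1).natDegree := by
        rw [zero_add]; exact natDegree_mul_le
    _ ≤ m 0 * f.natDegree + m 1 * g.natDegree := by gcongr <;> exact natDegree_pow_le
    _ ≤ m 0 * e + m 1 * e := by gcongr
    _ = (m 0 + m 1) * e := by ring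
    _ ≤ R.totalDegree * e := by gcongr
    _ = e * R.totalDegree := by ring

lemma card_through_le (P Q : MvPolynomial (Fin 2) ℝ) (d : ℕ)
    (hP : P.totalDegree ≤ d) (hQ : Q.totalDegree ≤ d)
    (hfin : {M : Set (ℝ × ℝ) | InvLine P Q M}.Finite)
    (q : ℝ × ℝ) (F : Finset (Set (ℝ × ℝ)))
    (hF : ∀ L ∈ F, InvLine P Q L ∧ q ∈ L) : F.card ≤ d + 1 := by
  classical
  -- choose data for each line
  have hdata : ∀ x : {L // L ∈ F}, ∃ a b c : ℝ, (a, b) ≠ ((0:ℝ), (0:ℝ)) ∧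
      x.1 = lineSet a b c ∧ (∀ r ∈ x.1, a * pev P r + b * pev Q r = 0) ∧
      a * q.1 + b * q.2 + c = 0 := by
    intro x
    obtain ⟨⟨a, b, c, hab, hL, hInv⟩, hq⟩ := hF x.1 x.2
    refine ⟨a, b, c, hab, hL, hInv, ?_⟩
    have := hq; rw [hL] at this; exact this
  choose a b c hab hLeq hInv hqon using hdata
  have hnpos : ∀ x, 0 < (a x)^2 + (b x)^2 := fun x => sq_pos_of_ne (hab x)
  set e : {L // L ∈ F} → ℝ := fun x => Real.sqrt ((a x)^2 + (b x)^2) with he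
  have hesq : ∀ x, (e x)^2 = (a x)^2 + (b x)^2 := fun x => Real.sq_sqrt (hnpos x).le
  have hepos : ∀ x, 0 < e x := fun x => Real.sqrt_pos.mpr (hnpos x)
  set ρ : {L // L ∈ F} → Finset ℝ := fun x =>
    if a x = 0 then {0} else {(b x + e x) / (a x), (b x - e x) / (a x)} with hρ
  -- every u in ρ x satisfies the direction equation
  have hroot : ∀ x, ∀ u ∈ ρ x, a x * (u^2 - 1) = 2 * b x * u := by
    intro x u hu
    by_cases h0 : a x = 0
    · simp [hρ, h0] at hu
      simp [h0, hu]
    · simp [hρ, h0, Finset.mem_insert, Finset.mem_singleton] at hu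
      have hnx := hesq x
      rcases hu with rfl | rfl <;> field_simp <;> linear_combination hnx
  have hcard2 : ∀ x, a x ≠ 0 → (ρ x).card = 2 := by
    intro x hx
    simp only [hρ, if_neg hx]
    rw [Finset.card_insert_of_notMem, Finset.card_singleton]
    simp only [Finset.mem_singleton]
    intro hcon
    have : e x = 0 := by field_simp at hcon; linarith
    exact (hepos x).ne' this
  have hcard1 : ∀ x, a x = 0 → (ρ x).card = 1 := by
    intro x hx; simp [hρ, hx]
  -- at most one exceptional line
  have hexc : ∀ x y : {L // L ∈ F}, a x = 0 → a y = 0 → x = y := by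
    intro x y hx hy
    have hb : ∀ z : {L // L ∈ F}, a z = 0 → z.1 = {r : ℝ × ℝ | r.2 = q.2} := by
      intro z hz
      have hbz : b z ≠ 0 := by
        intro hbz; exact hab z (by rw [hz, hbz])
      rw [hLeq z]
      ext r
      simp only [lineSet, Set.mem_setOf_eq, hz, zero_mul, zero_add]
      have hq2 := hqon z
      rw [hz] at hq2
      constructor
      · intro hr
        have : b z * r.2 = b z * q.2 := by linarith
        exact mul_left_cancel₀ hbz this
      · intro hr; rw [hr]; linarith
    exact Subtype.ext ((hb x hx).trans (hb y hy).symm)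
  -- disjointness
  have hdisj : ∀ x ∈ F.attach, ∀ y ∈ F.attach, x ≠ y → Disjoint (ρ x) (ρ y) := by
    intro x _ y _ hxy
    rw [Finset.disjoint_left]
    intro u hux huy
    exact hxy (Subtype.ext (((hLeq x).trans
      (lineSet_param (hab x) (by rw [← hLeq x] at *; exact (hF x.1 x.2).2 ) (hroot x u hux))).trans
      ((lineSet_param (hab y) (by rw [← hLeq y] at *; exact (hF y.1 y.2).2) (hroot y u huy)).symm.trans
      (hLeq y).symm)))
  set T : Finset ℝ := F.attach.biUnion ρ with hT
  have hTcard : T.card = ∑ x ∈ F.attach, (ρ x).card := Finset.card_biUnion hdisj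
  have hcount : 2 * F.card ≤ T.card + 1 := by
    have h1 : ∑ x ∈ F.attach, ((ρ x).card + (if a x = 0 then 1 else 0)) ≥
        ∑ x ∈ F.attach, 2 := by
      apply Finset.sum_le_sum
      intro x _
      by_cases hx : a x = 0
      · rw [hcard1 x hx, if_pos hx]
      · rw [hcard2 x hx, if_neg hx]
    have h2 : ∑ x ∈ F.attach, (if a x = 0 then 1 else 0) ≤ 1 := by
      rw [← Finset.card_filter]
      exact Finset.card_le_one.mpr (fun x hx y hy =>
        hexc x y (Finset.mem_filter.mp hx).2 (Finset.mem_filter.mp hy).2)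
    rw [Finset.sum_add_distrib] at h1
    simp only [Finset.sum_const, Finset.card_attach, smul_eq_mul] at h1
    omega
  -- the parameter polynomial family
  set ff : ℝ → ℝ[X] := fun τ => Polynomial.C q.1 + Polynomial.C τ * (1 - Polynomial.X^2) with hff
  set gg : ℝ → ℝ[X] := fun τ => Polynomial.C q.2 + Polynomial.C (2*τ) * Polynomial.X with hgg
  set G : ℝ → ℝ[X] := fun τ =>
    Polynomial.C 2 * Polynomial.X * (MvPolynomial.aeval ![ff τ, gg τ] P)
      + (Polynomial.X^2 - 1) * (MvPolynomial.aeval ![ff τ, gg τ] Q) with hG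
  have hGeval : ∀ τ u : ℝ, (G τ).eval u =
      2*u * pev P (q.1 + τ*(1-u^2), q.2 + τ*(2*u))
        + (u^2-1) * pev Q (q.1 + τ*(1-u^2), q.2 + τ*(2*u)) := by
    intro τ u
    have h1 : (ff τ).eval u = q.1 + τ*(1-u^2) := by simp [hff]
    have h2 : (gg τ).eval u = q.2 + τ*(2*u) := by simp [hgg]; ring
    simp only [hG, Polynomial.eval_add, Polynomial.eval_mul, Polynomial.eval_pow,
      Polynomial.eval_sub, Polynomial.eval_one, Polynomial.eval_C, Polynomial.eval_X,
      eval_aeval_pair, h1, h2, pev]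
  by_cases hall : ∀ τ : ℝ, G τ = 0
  · -- all lines through q are invariant : contradiction with finiteness
    exfalso
    have hIL : ∀ u : ℝ, InvLine P Q (lineSet (2*u) (u^2-1) (-(2*u*q.1 + (u^2-1)*q.2))) := by
      intro u
      have hab' : ((2*u : ℝ), (u^2-1 : ℝ)) ≠ ((0:ℝ),(0:ℝ)) := by
        intro hc
        have h1 : 2*u = 0 := congrArg Prod.fst hc
        have h2 : u^2 - 1 = 0 := congrArg Prod.snd hc
        nlinarith
      refine ⟨2*u, u^2-1, _, hab', rfl, ?_⟩
      intro r hr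
      simp only [lineSet, Set.mem_setOf_eq] at hr
      have hd : (2*u) * (r.1 - q.1) + (u^2-1) * (r.2 - q.2) = 0 := by linarith
      obtain ⟨t, ht1, ht2⟩ := perp_exists hab' hd
      have hr1 : r.1 = q.1 + t*(1-u^2) := by linear_combination ht1
      have hr2 : r.2 = q.2 + t*(2*u) := by linear_combination ht2
      have hz := hGeval t u
      rw [hall t] at hz
      simp only [Polynomial.eval_zero] at hz
      have hrpair : r = (q.1 + t*(1-u^2), q.2 + t*(2*u)) := Prod.ext hr1 hr2
      rw [hrpair]
      linarith [hz]
    set f : ℝ → Set (ℝ × ℝ) := fun u => lineSet (2*u) (u^2-1) (-(2*u*q.1 + (u^2-1)*q.2)) with hf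
    have hinj : Set.InjOn f (Set.Ioi 0) := by
      intro u hu v hv huv
      have hmem : ((q.1 + (1-u^2), q.2 + 2*u) : ℝ × ℝ) ∈ f u := by
        simp only [hf, lineSet, Set.mem_setOf_eq]; ring
      rw [huv] at hmem
      simp only [hf, lineSet, Set.mem_setOf_eq] at hmem
      have hfac : (v - u) * (1 + u*v) = 0 := by linear_combination hmem / 2
      rcases mul_eq_zero.mp hfac with h | h
      · linarith
      · nlinarith [Set.mem_Ioi.mp hu, Set.mem_Ioi.mp hv]
    have himg : f '' (Set.Ioi 0) ⊆ {M : Set (ℝ × ℝ) | InvLine P Q M} := by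
      rintro M ⟨u, _, rfl⟩; exact hIL u
    exact (hfin.subset himg).not_infinite (Set.Infinite.image hinj (Set.Ioi_infinite 0))
  · push_neg at hall
    obtain ⟨τ, hτ⟩ := hall
    have hsub : T ⊆ (G τ).roots.toFinset := by
      intro u hu
      rw [hT, Finset.mem_biUnion] at hu
      obtain ⟨x, _, hux⟩ := hu
      have hrootx := hroot x u hux
      obtain ⟨l, hl1, hl2⟩ := colinear_exists (hab x)
        (by linear_combination hrootx : a x * (u^2-1) = b x * (2*u))
      have hmem : ((q.1 + τ*(1-u^2), q.2 + τ*(2*u)) : ℝ × ℝ) ∈ x.1 := by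
        rw [hLeq x]
        simp only [lineSet, Set.mem_setOf_eq]
        linear_combination hqon x - τ * hrootx
      have hval := hInv x _ hmem
      rw [Multiset.mem_toFinset, Polynomial.mem_roots']
      refine ⟨hτ, ?_⟩
      show (G τ).eval u = 0
      rw [hGeval τ u]
      linear_combination l * hval + pev P (q.1 + τ*(1-u^2), q.2 + τ*(2*u)) * hl1
        + pev Q (q.1 + τ*(1-u^2), q.2 + τ*(2*u)) * hl2
    have h4 : (G τ).natDegree ≤ 2*d + 2 := by
      have hffd : (ff τ).natDegree ≤ 2 := by simp only [hff]; compute_degree; all_goals omega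
      have hggd : (gg τ).natDegree ≤ 2 := by simp only [hgg]; compute_degree; all_goals omega
      have hp := natDegree_aeval_pair_le (ff τ) (gg τ) 2 hffd hggd P
      have hq2 := natDegree_aeval_pair_le (ff τ) (gg τ) 2 hffd hggd Q
      have e1 : (Polynomial.C (2:ℝ) * Polynomial.X).natDegree ≤ 1 := by compute_degree
      have e2 : ((Polynomial.X:ℝ[X])^2 - 1).natDegree ≤ 2 := by compute_degree
      have t1 := Polynomial.natDegree_mul_le (p := Polynomial.C (2:ℝ) * Polynomial.X)
        (q := MvPolynomial.aeval ![ff τ, gg τ] P)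
      have t2 := Polynomial.natDegree_mul_le (p := (Polynomial.X:ℝ[X])^2 - 1)
        (q := MvPolynomial.aeval ![ff τ, gg τ] Q)
      have t3 := Polynomial.natDegree_add_le
        (Polynomial.C (2:ℝ) * Polynomial.X * (MvPolynomial.aeval ![ff τ, gg τ] P))
        ((Polynomial.X^2 - 1) * (MvPolynomial.aeval ![ff τ, gg τ] Q))
      simp only [hG]
      omega
    have hTle : T.card ≤ 2*d + 2 :=
      le_trans (Finset.card_le_card hsub)
        (le_trans (Multiset.toFinset_card_le _) (le_trans (Polynomial.card_roots' _) h4))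
    omega

lemma card_parallel_le (P Q : MvPolynomial (Fin 2) ℝ) (d : ℕ)
    (hP : P.totalDegree ≤ d) (hQ : Q.totalDegree ≤ d)
    (hfin : {M : Set (ℝ × ℝ) | InvLine P Q M}.Finite)
    (F : Finset (Set (ℝ × ℝ)))
    (hF : ∀ L ∈ F, InvLine P Q L)
    (hpar : ∀ L ∈ F, ∀ L' ∈ F, L = L' ∨ L ∩ L' = ∅) : F.card ≤ d := by
  classical
  rcases F.eq_empty_or_nonempty with rfl | ⟨L0, hL0⟩
  · simp
  obtain ⟨a, b, c0, hab, hL0eq, -⟩ := hF L0 hL0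
  have hn : a^2 + b^2 ≠ 0 := (sq_pos_of_ne hab).ne'
  have hdata : ∀ x : {L // L ∈ F}, ∃ g : ℝ, x.1 = lineSet a b g ∧
      ∀ r ∈ x.1, a * pev P r + b * pev Q r = 0 := by
    intro x
    obtain ⟨a', b', c', hab', hLeq', hInv'⟩ := hF x.1 x.2
    have hcross : a * b' = b * a' := by
      rcases hpar x.1 x.2 L0 hL0 with heq | hdisj
      · have h1 : lineSet a' b' c' = lineSet a b c0 := by rw [← hLeq', ← hL0eq, heq]
        have := lineSet_cross hab' h1
        linarith
      · by_contra hc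
        have hΔ0 : a*b' - b*a' ≠ 0 := sub_ne_zero.mpr hc
        set z : ℝ × ℝ := ((b*c' - b'*c0)/(a*b' - b*a'), (a'*c0 - a*c')/(a*b' - b*a')) with hz
        have hz1 : z ∈ L0 := by
          rw [hL0eq]; simp only [lineSet, Set.mem_setOf_eq, hz]; field_simp; ring
        have hz2 : z ∈ x.1 := by
          rw [hLeq']; simp only [lineSet, Set.mem_setOf_eq, hz]
          rw [mul_div_assoc', mul_div_assoc', ← add_div, div_add' _ _ _ hΔ0]
          apply div_eq_zero_iff.mpr; left; ring
        have hmem : z ∈ x.1 ∩ L0 := ⟨hz2, hz1⟩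
        rw [hdisj] at hmem
        exact hmem
    obtain ⟨l, hla, hlb⟩ := colinear_exists hab hcross
    have hl0 : l ≠ 0 := by
      rintro rfl; apply hab'; rw [hla, hlb]; simp
    have hc' : c' = l * (c'/l) := by field_simp
    refine ⟨c'/l, ?_, ?_⟩
    · rw [hLeq']; ext r; simp only [lineSet, Set.mem_setOf_eq]
      constructor
      · intro h
        have h3 : l * (a*r.1 + b*r.2 + c'/l) = 0 := by
          linear_combination h - r.1 * hla - r.2 * hlb - hc'
        have := mul_eq_zero.mp h3
        tauto
      · intro h
        linear_combination l * h + r.1 * hla + r.2 * hlb + hc'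
    · intro r hr
      have hv := hInv' r hr
      have h2 : l * (a * pev P r + b * pev Q r) = 0 := by
        linear_combination hv - pev P r * hla - pev Q r * hlb
      exact (mul_eq_zero.mp h2).resolve_left hl0
  choose γ hγeq hγInv using hdata
  have hγinj : Function.Injective γ := by
    intro x y hxy
    apply Subtype.ext
    rw [hγeq x, hγeq y, hxy]
  set T := Finset.image γ F.attach with hT
  have hTcard : T.card = F.card := by
    rw [hT, Finset.card_image_of_injective _ hγinj, Finset.card_attach]
  set ff : ℝ → Polynomial ℝ := fun τ =>
    Polynomial.C (-(a/(a^2+b^2))) * Polynomial.X + Polynomial.C (-(τ*b)) with hff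
  set gg : ℝ → Polynomial ℝ := fun τ =>
    Polynomial.C (-(b/(a^2+b^2))) * Polynomial.X + Polynomial.C (τ*a) with hgg
  set G : ℝ → Polynomial ℝ := fun τ => Polynomial.C a * (MvPolynomial.aeval ![ff τ, gg τ] P)
      + Polynomial.C b * (MvPolynomial.aeval ![ff τ, gg τ] Q) with hG
  have hGeval : ∀ τ s : ℝ, (G τ).eval s =
      a * pev P (-(a/(a^2+b^2))*s + -(τ*b), -(b/(a^2+b^2))*s + τ*a)
        + b * pev Q (-(a/(a^2+b^2))*s + -(τ*b), -(b/(a^2+b^2))*s + τ*a) := by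
    intro τ s
    have h1 : (ff τ).eval s = -(a/(a^2+b^2))*s + -(τ*b) := by simp [hff]
    have h2 : (gg τ).eval s = -(b/(a^2+b^2))*s + τ*a := by simp [hgg]
    simp only [hG, Polynomial.eval_add, Polynomial.eval_mul, Polynomial.eval_C,
      eval_aeval_pair, h1, h2, pev]
  have hptmem : ∀ s τ : ℝ,
      ((-(a/(a^2+b^2))*s + -(τ*b), -(b/(a^2+b^2))*s + τ*a) : ℝ × ℝ) ∈ lineSet a b s := by
    intro s τ; simp only [lineSet, Set.mem_setOf_eq]; field_simp; ring
  by_cases hall : ∀ τ : ℝ, G τ = 0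
  · exfalso
    have hIL : ∀ s : ℝ, InvLine P Q (lineSet a b s) := by
      intro s
      refine ⟨a, b, s, hab, rfl, ?_⟩
      intro r hr
      simp only [lineSet, Set.mem_setOf_eq] at hr
      set τ : ℝ := (-(b*r.1) + a*r.2)/(a^2+b^2) with hτdef
      have hrr : r = ((-(a/(a^2+b^2))*s + -(τ*b), -(b/(a^2+b^2))*s + τ*a) : ℝ × ℝ) := by
        apply Prod.ext
        · simp only [hτdef]; field_simp; ring_nf
          linear_combination a * hr
        · simp only [hτdef]; field_simp; ring_nf
          linear_combination b * hr
      have hz := hGeval τ s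
      rw [hall τ] at hz
      simp only [Polynomial.eval_zero] at hz
      rw [hrr]
      linarith [hz]
    have hinj2 : Function.Injective (fun s : ℝ => lineSet a b s) :=
      fun s s' h => lineSet_c_inj hab h
    have hrange : Set.range (fun s : ℝ => lineSet a b s) ⊆ {M : Set (ℝ × ℝ) | InvLine P Q M} := by
      rintro M ⟨s, rfl⟩; exact hIL s
    exact (hfin.subset hrange).not_infinite (Set.infinite_range_of_injective hinj2)
  · push_neg at hall
    obtain ⟨τ, hτ⟩ := hall
    have hsub : T ⊆ (G τ).roots.toFinset := by
      intro s hs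
      rw [hT, Finset.mem_image] at hs
      obtain ⟨x, -, rfl⟩ := hs
      have hmem : ((-(a/(a^2+b^2))*(γ x) + -(τ*b), -(b/(a^2+b^2))*(γ x) + τ*a) : ℝ × ℝ) ∈ x.1 := by
        rw [hγeq x]; exact hptmem (γ x) τ
      have hval := hγInv x _ hmem
      rw [Multiset.mem_toFinset, Polynomial.mem_roots']
      refine ⟨hτ, ?_⟩
      show (G τ).eval (γ x) = 0
      rw [hGeval]
      linarith [hval]
    have h4 : (G τ).natDegree ≤ d := by
      have hffd : (ff τ).natDegree ≤ 1 := by simp only [hff]; compute_degree; all_goals omega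
      have hggd : (gg τ).natDegree ≤ 1 := by simp only [hgg]; compute_degree; all_goals omega
      have hp := natDegree_aeval_pair_le (ff τ) (gg τ) 1 hffd hggd P
      have hq2 := natDegree_aeval_pair_le (ff τ) (gg τ) 1 hffd hggd Q
      have t1 := Polynomial.natDegree_mul_le (p := Polynomial.C a)
        (q := MvPolynomial.aeval ![ff τ, gg τ] P)
      have t2 := Polynomial.natDegree_mul_le (p := Polynomial.C b)
        (q := MvPolynomial.aeval ![ff τ, gg τ] Q)
      have t3 := Polynomial.natDegree_add_le (Polynomial.C a * (MvPolynomial.aeval ![ff τ, gg τ] P))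
        (Polynomial.C b * (MvPolynomial.aeval ![ff τ, gg τ] Q))
      have e1 : (Polynomial.C a).natDegree = 0 := Polynomial.natDegree_C a
      have e2 : (Polynomial.C b).natDegree = 0 := Polynomial.natDegree_C b
      simp only [hG]
      omega
    calc F.card = T.card := hTcard.symm
      _ ≤ d := le_trans (Finset.card_le_card hsub)
        (le_trans (Multiset.toFinset_card_le _) (le_trans (Polynomial.card_roots' _) h4))

/-- **Corollary.** If `(P, Q)` is a polynomial vector field of degree `d` fixing
every line of the arrangement `A` and whose set of invariant lines is finite, then
`d ≥ max (m(A) - 1) (p(A))`; in particular the minimal degree `d_f(A)` of a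
polynomial vector field fixing `A` and fixing only finitely many lines satisfies
`d_f(A) ≥ ν_∞(A) = max (m(A) - 1) (p(A))`. -/
theorem finite_type_degree_lower_bound
    (A : Finset (Set (ℝ × ℝ))) (hA : ∀ L ∈ A, IsLine L)
    (P Q : MvPolynomial (Fin 2) ℝ) (d : ℕ)
    (hdeg : max P.totalDegree Q.totalDegree = d)
    (hfix : ∀ L ∈ A, InvLine P Q L)
    (hfin : {M : Set (ℝ × ℝ) | InvLine P Q M}.Finite) :
    max (mArr A - 1) (pArr A) ≤ d := by
  classical
  have hP : P.totalDegree ≤ d := hdeg ▸ le_max_left _ _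
  have hQ : Q.totalDegree ≤ d := hdeg ▸ le_max_right _ _
  apply max_le
  · have hm : mArr A ≤ d + 1 := by
      apply csSup_le'
      rintro k ⟨q, rfl⟩
      unfold numThrough
      exact card_through_le P Q d hP hQ hfin q _
        (fun L hL => ⟨hfix L (Finset.mem_filter.mp hL).1, (Finset.mem_filter.mp hL).2⟩)
    omega
  · apply csSup_le'
    rintro k ⟨S, hSA, hp, rfl⟩
    exact card_parallel_le P Q d hP hQ hfin S (fun L hL => hfix L (hSA hL))
      (fun L hL L' hL' => hp L hL L' hL')
end

section
/- Let 𝔏 be an infinite set of pairwise distinct lines in ℝ², and let Sing(𝔏) be the set of points of ℝ² lying on at least two distinct lines of 𝔏. Then the cardinality of Sing(𝔏) is 0, 1, or infinite; equivalently, if Sing(𝔏) is finite and contains at least two points, one obtains a contradiction. -/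
open MvPolynomial

/-- The set of singular points of a family of lines: points lying on at least two
distinct lines of the family. -/
def singSet (𝔏 : Set (Set (ℝ × ℝ))) : Set (ℝ × ℝ) :=
  {q : ℝ × ℝ | ∃ L ∈ 𝔏, ∃ L' ∈ 𝔏, L ≠ L' ∧ q ∈ L ∧ q ∈ L'}

lemma mem_lineSet' {a b c : ℝ} {q : ℝ × ℝ} : q ∈ lineSet a b c ↔ a * q.1 + b * q.2 + c = 0 :=
  Iff.rfl

lemma lineSet_smul_eq' {a b c t : ℝ} (ht : t ≠ 0) :
    lineSet (t * a) (t * b) (t * c) = lineSet a b c := by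
  ext q
  simp only [lineSet, Set.mem_setOf_eq]
  rw [show t*a*q.1 + t*b*q.2 + t*c = t * (a*q.1 + b*q.2 + c) by ring, mul_eq_zero]
  simp [ht]

lemma ne_zero_or' {a b : ℝ} (h : (a, b) ≠ ((0 : ℝ), (0 : ℝ))) : a ≠ 0 ∨ b ≠ 0 := by
  by_contra hh
  push_neg at hh
  exact h (by simp [hh.1, hh.2])

lemma line_eq_of_cross_zero' {a b c a' b' c' : ℝ} (h : (a, b) ≠ (0,0)) (h' : (a',b') ≠ (0,0))
    (hc : a * b' - b * a' = 0) {q : ℝ × ℝ} (hq : q ∈ lineSet a b c)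
    (hq' : q ∈ lineSet a' b' c') :
    lineSet a' b' c' = lineSet a b c := by
  have e1 : a * q.1 + b * q.2 + c = 0 := hq
  have e2 : a' * q.1 + b' * q.2 + c' = 0 := hq'
  rcases ne_zero_or' h with ha | hb
  · have ha' : a' = (a'/a) * a := by field_simp
    have hb' : b' = (a'/a) * b := by
      field_simp
      linarith [hc]
    have hc' : c' = (a'/a) * c := by
      rw [div_mul_eq_mul_div, eq_div_iff ha]
      linear_combination a * e2 - a' * e1 - q.2 * hc
    have htne : a'/a ≠ 0 := by
      intro h0
      rw [h0, zero_mul] at ha' hb'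
      exact h' (by simp [ha', hb'])
    calc lineSet a' b' c' = lineSet (a'/a * a) (a'/a * b) (a'/a * c) := by
          rw [← ha', ← hb', ← hc']
      _ = lineSet a b c := lineSet_smul_eq' htne
  · have hb' : b' = (b'/b) * b := by field_simp
    have ha' : a' = (b'/b) * a := by
      field_simp
      linarith [hc]
    have hc' : c' = (b'/b) * c := by
      rw [div_mul_eq_mul_div, eq_div_iff hb]
      linear_combination b * e2 - b' * e1 + q.1 * hc
    have htne : b'/b ≠ 0 := by
      intro h0
      rw [h0, zero_mul] at ha' hb'
      exact h' (by simp [ha', hb'])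
    calc lineSet a' b' c' = lineSet (b'/b * a) (b'/b * b) (b'/b * c) := by
          rw [← ha', ← hb', ← hc']
      _ = lineSet a b c := lineSet_smul_eq' htne

lemma exists_inter_of_cross_ne' {a b c a' b' c' : ℝ} (h : a * b' - b * a' ≠ 0) :
    ∃ q : ℝ × ℝ, q ∈ lineSet a b c ∧ q ∈ lineSet a' b' c' := by
  refine ⟨((b * c' - b' * c) / (a*b' - b*a'), (a' * c - a * c') / (a*b' - b*a')), ?_, ?_⟩
  · simp only [lineSet, Set.mem_setOf_eq]
    rw [div_eq_mul_inv, div_eq_mul_inv]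
    linear_combination (-c) * mul_inv_cancel₀ h
  · simp only [lineSet, Set.mem_setOf_eq]
    rw [div_eq_mul_inv, div_eq_mul_inv]
    linear_combination (-c') * mul_inv_cancel₀ h

lemma cross_eq_zero_of_two_mem' {a b c a' b' c' : ℝ} {q1 q2 : ℝ × ℝ} (hne : q1 ≠ q2)
    (h1 : q1 ∈ lineSet a b c) (h2 : q2 ∈ lineSet a b c)
    (h1' : q1 ∈ lineSet a' b' c') (h2' : q2 ∈ lineSet a' b' c') :
    a * b' - b * a' = 0 := by
  have e1 : a * (q2.1 - q1.1) + b * (q2.2 - q1.2) = 0 := by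
    have g1 : a * q1.1 + b * q1.2 + c = 0 := h1
    have g2 : a * q2.1 + b * q2.2 + c = 0 := h2
    linarith
  have e2 : a' * (q2.1 - q1.1) + b' * (q2.2 - q1.2) = 0 := by
    have g1 : a' * q1.1 + b' * q1.2 + c' = 0 := h1'
    have g2 : a' * q2.1 + b' * q2.2 + c' = 0 := h2'
    linarith
  have hd : q2.1 - q1.1 ≠ 0 ∨ q2.2 - q1.2 ≠ 0 := by
    by_contra hh
    push_neg at hh
    exact hne (Prod.ext (by linarith [hh.1]) (by linarith [hh.2]))
  rcases hd with hx | hy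
  · have : (a * b' - b * a') * (q2.1 - q1.1) = 0 := by linear_combination b' * e1 - b * e2
    exact (mul_eq_zero.mp this).resolve_right hx
  · have : (a * b' - b * a') * (q2.2 - q1.2) = 0 := by linear_combination a * e2 - a' * e1
    exact (mul_eq_zero.mp this).resolve_right hy

lemma inter_subsingleton' {L L' : Set (ℝ × ℝ)} (hL : IsLine L) (hL' : IsLine L')
    (hne : L ≠ L') {x y : ℝ × ℝ} (hx : x ∈ L ∩ L') (hy : y ∈ L ∩ L') : x = y := by
  by_contra hxy
  obtain ⟨a, b, c, hab, rfl⟩ := hL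
  obtain ⟨a', b', c', hab', rfl⟩ := hL'
  exact hne (line_eq_of_cross_zero' hab hab'
    (cross_eq_zero_of_two_mem' hxy hx.1 hy.1 hx.2 hy.2) hx.1 hx.2).symm

lemma eq_of_disjoint_disjoint' {L M1 M2 : Set (ℝ × ℝ)} (hL : IsLine L) (h1 : IsLine M1)
    (h2 : IsLine M2) (hd1 : M1 ∩ L = ∅) (hd2 : M2 ∩ L = ∅) {q : ℝ × ℝ}
    (hq1 : q ∈ M1) (hq2 : q ∈ M2) : M1 = M2 := by
  obtain ⟨a, b, c, hab, rfl⟩ := hL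
  obtain ⟨a1, b1, c1, hab1, rfl⟩ := h1
  obtain ⟨a2, b2, c2, hab2, rfl⟩ := h2
  have hc1 : a1 * b - b1 * a = 0 := by
    by_contra h
    obtain ⟨q', hq', hq''⟩ := exists_inter_of_cross_ne' h
    have : q' ∈ lineSet a1 b1 c1 ∩ lineSet a b c := ⟨hq', hq''⟩
    rw [hd1] at this
    exact this
  have hc2 : a2 * b - b2 * a = 0 := by
    by_contra h
    obtain ⟨q', hq', hq''⟩ := exists_inter_of_cross_ne' h
    have : q' ∈ lineSet a2 b2 c2 ∩ lineSet a b c := ⟨hq', hq''⟩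
    rw [hd2] at this
    exact this
  have hc : a1 * b2 - b1 * a2 = 0 := by
    rcases ne_zero_or' hab with ha | hb
    · have : (a1 * b2 - b1 * a2) * a = 0 := by linear_combination a2 * hc1 - a1 * hc2
      exact (mul_eq_zero.mp this).resolve_right ha
    · have : (a1 * b2 - b1 * a2) * b = 0 := by linear_combination b2 * hc1 - b1 * hc2
      exact (mul_eq_zero.mp this).resolve_right hb
  exact (line_eq_of_cross_zero' hab1 hab2 hc hq1 hq2).symm

lemma pencil_infinite' {𝔏 : Set (Set (ℝ × ℝ))} (hline : ∀ L ∈ 𝔏, IsLine L)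
    {F : Set (Set (ℝ × ℝ))} (hF : F ⊆ 𝔏) (hFinf : F.Infinite) {r : ℝ × ℝ}
    (hr : ∀ M ∈ F, r ∈ M) {N : Set (ℝ × ℝ)} (hN : N ∈ 𝔏) (hrN : r ∉ N) :
    (singSet 𝔏).Infinite := by
  classical
  set F' := {M ∈ F | (M ∩ N).Nonempty} with hF'def
  have hsub : (F \ F').Subsingleton := by
    intro M1 h1 M2 h2
    have d1 : M1 ∩ N = ∅ := by
      rcases h1 with ⟨h1F, h1'⟩
      rw [Set.not_nonempty_iff_eq_empty.symm]
      intro hne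
      exact h1' ⟨h1F, hne⟩
    have d2 : M2 ∩ N = ∅ := by
      rcases h2 with ⟨h2F, h2'⟩
      rw [Set.not_nonempty_iff_eq_empty.symm]
      intro hne
      exact h2' ⟨h2F, hne⟩
    exact eq_of_disjoint_disjoint' (hline N hN) (hline _ (hF h1.1)) (hline _ (hF h2.1))
      d1 d2 (hr _ h1.1) (hr _ h2.1)
  have hF'inf : F'.Infinite := by
    have h1 := hFinf.diff hsub.finite
    have he : F \ (F \ F') = F' := by
      ext M
      simp only [Set.mem_diff, hF'def, Set.mem_setOf_eq]
      tauto
    rwa [he] at h1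
  have hex : ∀ M : Set (ℝ × ℝ), ∃ u : ℝ × ℝ, M ∈ F' → u ∈ M ∩ N := by
    intro M
    by_cases h : M ∈ F'
    · exact ⟨h.2.some, fun _ => h.2.some_mem⟩
    · exact ⟨(0, 0), fun h' => absurd h' h⟩
  choose f hf using hex
  apply Set.infinite_of_injOn_mapsTo (f := f) (s := F') ?_ ?_ hF'inf
  · intro M1 h1 M2 h2 heq
    by_contra hne
    have hu1 := hf M1 h1
    have hu2 := hf M2 h2
    rw [heq] at hu1
    have : f M2 = r := inter_subsingleton' (hline _ (hF h1.1)) (hline _ (hF h2.1)) hne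
      ⟨hu1.1, hu2.1⟩ ⟨hr _ h1.1, hr _ h2.1⟩
    rw [this] at hu2
    exact hrN hu2.2
  · intro M hM
    have hu := hf M hM
    have hMne : M ≠ N := by
      intro h
      rw [h] at hM
      exact hrN (hr _ hM.1)
    exact ⟨M, hF hM.1, N, hN, hMne, hu.1, hu.2⟩

/-- **Lemma.** For an infinite set `𝔏` of (pairwise distinct) lines in the plane,
the number of singular points of `𝔏` is `0`, `1` or infinite. -/
theorem singSet_trichotomy (𝔏 : Set (Set (ℝ × ℝ)))
    (hline : ∀ L ∈ 𝔏, IsLine L) (hinf : 𝔏.Infinite) :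
    singSet 𝔏 = ∅ ∨ (∃ q : ℝ × ℝ, singSet 𝔏 = {q}) ∨ (singSet 𝔏).Infinite := by
  classical
  by_contra hcon
  push_neg at hcon
  obtain ⟨h0, h1, hfin⟩ := hcon
  obtain ⟨p, hp⟩ := h0
  obtain ⟨q, hq, hpq⟩ : ∃ q ∈ singSet 𝔏, q ≠ p := by
    by_contra hh
    push_neg at hh
    exact h1 p (Set.eq_singleton_iff_unique_mem.mpr ⟨hp, hh⟩)
  obtain ⟨L0, hL0, B0, hB0, hL0B0, hpL0, hpB0⟩ := hp
  -- a line through p different from L0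
  have hNex : ∃ N ∈ 𝔏, p ∈ N ∧ N ≠ L0 := ⟨B0, hB0, hpB0, fun h => hL0B0 h.symm⟩
  set Par := {M ∈ 𝔏 | M = L0 ∨ M ∩ L0 = ∅} with hPardef
  by_cases hPar : Par.Infinite
  · -- infinitely many lines parallel to (or equal to) L0; N crosses them all
    obtain ⟨N, hN, hpN, hNL0⟩ := hNex
    have hex : ∀ M : Set (ℝ × ℝ), ∃ u : ℝ × ℝ, M ∈ Par → u ∈ N ∧ u ∈ M ∧ N ≠ M := by
      intro M
      by_cases h : M ∈ Par
      · rcases h.2 with rfl | hdis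
        · exact ⟨p, fun _ => ⟨hpN, hpL0, hNL0⟩⟩
        · have hNM : N ≠ M := by
            rintro rfl
            have : p ∈ N ∩ L0 := ⟨hpN, hpL0⟩
            rw [hdis] at this
            exact this
          have hnonempty : (N ∩ M).Nonempty := by
            by_contra hne
            rw [Set.not_nonempty_iff_eq_empty] at hne
            exact hNL0 (eq_of_disjoint_disjoint' (hline _ h.1) (hline _ hN) (hline _ hL0)
              hne (by rw [Set.inter_comm]; exact hdis) hpN hpL0)
          exact ⟨hnonempty.some, fun _ => ⟨hnonempty.some_mem.1, hnonempty.some_mem.2, hNM⟩⟩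
      · exact ⟨(0, 0), fun h' => absurd h' h⟩
    choose g hg using hex
    apply absurd hfin
    rw [← Set.not_infinite]
    intro hc
    apply hc
    apply Set.infinite_of_injOn_mapsTo (f := g) (s := Par) ?_ ?_ hPar
    · intro M1 h1 M2 h2 heq
      by_contra hMne
      have hu1 := hg M1 h1
      have hu2 := hg M2 h2
      rw [heq] at hu1
      -- g M2 ∈ M1 ∩ M2
      rcases h1.2 with rfl | hd1 <;> rcases h2.2 with rfl | hd2
      · exact hMne rfl
      · have : g M2 ∈ M2 ∩ M1 := ⟨hu2.2.1, hu1.2.1⟩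
        rw [hd2] at this
        exact this
      · have : g M2 ∈ M1 ∩ M2 := ⟨hu1.2.1, hu2.2.1⟩
        rw [hd1] at this
        exact this
      · exact hMne (eq_of_disjoint_disjoint' (hline _ hL0) (hline _ h1.1) (hline _ h2.1)
          hd1 hd2 hu1.2.1 hu2.2.1)
    · intro M hM
      have hu := hg M hM
      exact ⟨N, hN, M, hM.1, hu.2.2, hu.1, hu.2.1⟩
  · -- Par finite: infinitely many lines meet L0, concentrate at a point r of S
    rw [Set.not_infinite] at hPar
    have hTinf : (𝔏 \ Par).Infinite := hinf.diff hPar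
    have hex : ∀ M : Set (ℝ × ℝ), ∃ u : ℝ × ℝ,
        M ∈ 𝔏 \ Par → u ∈ M ∧ u ∈ L0 ∧ M ≠ L0 := by
      intro M
      by_cases h : M ∈ 𝔏 \ Par
      · have h' : ¬(M = L0 ∨ M ∩ L0 = ∅) := fun hh => h.2 ⟨h.1, hh⟩
        push_neg at h'
        have hne : (M ∩ L0).Nonempty := h'.2
        exact ⟨hne.some, fun _ => ⟨hne.some_mem.1, hne.some_mem.2, h'.1⟩⟩
      · exact ⟨(0, 0), fun h' => absurd h' h⟩
    choose k hk using hex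
    have hkS : ∀ M ∈ 𝔏 \ Par, k M ∈ singSet 𝔏 := by
      intro M hM
      have hu := hk M hM
      exact ⟨M, hM.1, L0, hL0, hu.2.2, hu.1, hu.2.1⟩
    obtain ⟨r, hrS, hrfib⟩ : ∃ r ∈ singSet 𝔏, {M ∈ 𝔏 \ Par | k M = r}.Infinite := by
      by_contra hh
      push_neg at hh
      have hsub : 𝔏 \ Par ⊆ ⋃ r ∈ singSet 𝔏, {M ∈ 𝔏 \ Par | k M = r} := by
        intro M hM
        exact Set.mem_biUnion (hkS M hM) ⟨hM, rfl⟩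
      exact hTinf ((hfin.biUnion hh).subset hsub)
    -- every member of the fiber passes through r
    have hthr : ∀ M ∈ {M ∈ 𝔏 \ Par | k M = r}, r ∈ M := by
      intro M hM
      have := (hk M hM.1).1
      rwa [hM.2] at this
    -- find a line of 𝔏 avoiding r
    have hMx : ∃ Mx ∈ 𝔏, r ∉ Mx := by
      have hxne : p ≠ r ∨ q ≠ r := by
        by_contra hh
        push_neg at hh
        exact hpq (hh.2.trans hh.1.symm)
      have key : ∀ x : ℝ × ℝ, x ∈ singSet 𝔏 → x ≠ r → ∃ Mx ∈ 𝔏, r ∉ Mx := by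
        rintro x ⟨A, hA, B, hB, hAB, hxA, hxB⟩ hxr
        by_cases hrA : r ∈ A
        · refine ⟨B, hB, fun hrB => ?_⟩
          exact hxr (inter_subsingleton' (hline _ hA) (hline _ hB) hAB ⟨hxA, hxB⟩ ⟨hrA, hrB⟩)
        · exact ⟨A, hA, hrA⟩
      rcases hxne with h | h
      · exact key p (⟨L0, hL0, B0, hB0, hL0B0, hpL0, hpB0⟩) h
      · exact key q hq h
    obtain ⟨Mx, hMx𝔏, hrMx⟩ := hMx
    exact (pencil_infinite' hline (fun M hM => hM.1.1) hrfib hthr hMx𝔏 hrMx) hfin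
end
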